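/- If f and φ are twice differentiable and ∇²f(x) ⪯ L∇²φ(x) (Löwner order) for all x in an open convex set C, then f is L-smooth relative to φ on C, i.e. D_f(x,y) ≤ L·D_φ(x,y) for all x, y ∈ C. -/

import Mathlib

open scoped RealInnerProductSpace

noncomputable def breg {n : ℕ} (h : EuclideanSpace ℝ (Fin n) → ℝ)
    (h' : EuclideanSpace ℝ (Fin n) → EuclideanSpace ℝ (Fin n))
    (x y : EuclideanSpace ℝ (Fin n)) : ℝ :=
  h x - h y - ⟪h' y, x - y⟫

theorem rel_smooth_of_hessian_loewner {n : ℕ}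
    (C : Set (EuclideanSpace ℝ (Fin n))) (hC : IsOpen C) (hCc : Convex ℝ C)
    (f φ : EuclideanSpace ℝ (Fin n) → ℝ)
    (f' φ' : EuclideanSpace ℝ (Fin n) → EuclideanSpace ℝ (Fin n))
    (f'' φ'' : EuclideanSpace ℝ (Fin n) →
      EuclideanSpace ℝ (Fin n) →L[ℝ] EuclideanSpace ℝ (Fin n))
    (hf : ∀ x ∈ C, HasGradientAt f (f' x) x)
    (hφ : ∀ x ∈ C, HasGradientAt φ (φ' x) x)
    (hf' : ∀ x ∈ C, HasFDerivAt f' (f'' x) x)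
    (hφ' : ∀ x ∈ C, HasFDerivAt φ' (φ'' x) x)
    (L : ℝ) (hL : 0 < L)
    (hloewner : ∀ x ∈ C, ∀ v, ⟪f'' x v, v⟫ ≤ L * ⟪φ'' x v, v⟫) :
    ∀ x ∈ C, ∀ y ∈ C, breg f f' x y ≤ L * breg φ φ' x y := by
  intro x hx y hy
  set v : EuclideanSpace ℝ (Fin n) := x - y with hv
  set γ : ℝ → EuclideanSpace ℝ (Fin n) := fun t => y + t • v with hγ
  have hγ0 : γ 0 = y := by simp [hγ]
  have hγ1 : γ 1 = x := by simp [hγ, hv]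
  have hγmem : ∀ t ∈ Set.Icc (0:ℝ) 1, γ t ∈ C := by
    intro t ht
    have : γ t = (1 - t) • y + t • x := by
      simp only [hγ, hv, smul_sub]; module
    rw [this]
    exact hCc hy hx (by linarith [ht.2]) ht.1 (by ring)
  have hγd : ∀ t : ℝ, HasDerivAt γ v t := by
    intro t
    exact (by simpa using ((hasDerivAt_id t).smul_const v).const_add y :
      HasDerivAt (fun t => y + t • v) v t)
  -- η : derivative "velocity" function
  set η : ℝ → ℝ := fun t => L * ⟪φ' (γ t), v⟫ - ⟪f' (γ t), v⟫ with hη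
  have hηd : ∀ t ∈ Set.Icc (0:ℝ) 1, HasDerivAt η
      (L * ⟪φ'' (γ t) v, v⟫ - ⟪f'' (γ t) v, v⟫) t := by
    intro t ht
    have hmem := hγmem t ht
    have h1 : HasDerivAt (fun s => f' (γ s)) (f'' (γ t) v) t :=
      (hf' _ hmem).comp_hasDerivAt t (hγd t)
    have h2 : HasDerivAt (fun s => φ' (γ s)) (φ'' (γ t) v) t :=
      (hφ' _ hmem).comp_hasDerivAt t (hγd t)
    have h1' : HasDerivAt (fun s => ⟪f' (γ s), v⟫) (⟪f'' (γ t) v, v⟫) t := by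
      simpa using h1.inner ℝ (hasDerivAt_const t v)
    have h2' : HasDerivAt (fun s => ⟪φ' (γ s), v⟫) (⟪φ'' (γ t) v, v⟫) t := by
      simpa using h2.inner ℝ (hasDerivAt_const t v)
    exact (h2'.const_mul L).sub h1'
  have hηmono : MonotoneOn η (Set.Icc (0:ℝ) 1) := by
    apply monotoneOn_of_hasDerivWithinAt_nonneg (f' := fun t =>
        L * ⟪φ'' (γ t) v, v⟫ - ⟪f'' (γ t) v, v⟫) (convex_Icc 0 1)
    · intro t ht
      exact ((hηd t ht).continuousAt).continuousWithinAt
    · intro t ht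
      rw [interior_Icc] at ht
      exact (hηd t (Set.mem_Icc_of_Ioo ht)).hasDerivWithinAt
    · intro t ht
      rw [interior_Icc] at ht
      have := hloewner (γ t) (hγmem t (Set.mem_Icc_of_Ioo ht)) v
      linarith
  -- χ : the function whose monotonicity gives the result
  set χ : ℝ → ℝ := fun t => L * φ (γ t) - f (γ t) - t * η 0 with hχ
  have hχd : ∀ t ∈ Set.Icc (0:ℝ) 1, HasDerivAt χ (η t - η 0) t := by
    intro t ht
    have hmem := hγmem t ht
    have h1 : HasDerivAt (fun s => f (γ s)) (⟪f' (γ t), v⟫) t := by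
      have h := ((hf _ hmem).hasFDerivAt).comp_hasDerivAt t (hγd t)
      simp at h
      exact h
    have h2 : HasDerivAt (fun s => φ (γ s)) (⟪φ' (γ t), v⟫) t := by
      have h := ((hφ _ hmem).hasFDerivAt).comp_hasDerivAt t (hγd t)
      simp at h
      exact h
    have h3 : HasDerivAt (fun s : ℝ => s * η 0) (η 0) t := by
      simpa using (hasDerivAt_id t).mul_const (η 0)
    have := ((h2.const_mul L).sub h1).sub h3
    exact this
  have hχmono : MonotoneOn χ (Set.Icc (0:ℝ) 1) := by
    apply monotoneOn_of_hasDerivWithinAt_nonneg (f' := fun t => η t - η 0)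
      (convex_Icc 0 1)
    · intro t ht
      exact ((hχd t ht).continuousAt).continuousWithinAt
    · intro t ht
      rw [interior_Icc] at ht
      exact (hχd t (Set.mem_Icc_of_Ioo ht)).hasDerivWithinAt
    · intro t ht
      rw [interior_Icc] at ht
      have := hηmono (Set.left_mem_Icc.2 one_pos.le)
        (Set.mem_Icc_of_Ioo ht) ht.1.le
      linarith
  have hkey : χ 0 ≤ χ 1 :=
    hχmono (Set.left_mem_Icc.2 one_pos.le) (Set.right_mem_Icc.2 one_pos.le)
      zero_le_one
  simp only [hχ, hγ0, hγ1, hη, zero_mul, one_mul] at hkey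
  simp only [breg, hv] at *
  nlinarith [hkey]
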